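/- The bit-chipping field V_bc on K(N,1) is a valid discrete vector field whose only critical simplices are [] and [1]: every nondegenerate simplex σ = [a_1|...|a_k] with all a_i ≥ 1, other than [] and [1], is either a source (matched upward) or a target (matched downward), the matching is a bijection between sources and targets, and for each pair (σ, τ = V_bc(σ)), σ is a regular face of τ. -/

import Mathlib

/-- `lpow b` is the largest power of 2 not exceeding `b` (for `b ≥ 1`). -/
def lpow (b : ℕ) : ℕ := 2 ^ Nat.log 2 b

/-- `ltrim b = b - lpow b`. -/
def ltrim (b : ℕ) : ℕ := b - lpow b

/-- All entries of the sequence are positive (nondegenerate simplex of `K(ℕ,1)`). -/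
def posL (l : List ℕ) : Prop := ∀ a ∈ l, 1 ≤ a

/-- The length `q` of the dyadic part of `[a_1 | ⋯ | a_k]`: the largest `q` such that
`a_1, …, a_q` are all powers of 2. -/
def dyLen (l : List ℕ) : ℕ :=
  (l.takeWhile fun a => a == 2 ^ Nat.log 2 a).length

/-- `l` is fully dyadic: all entries are powers of 2. -/
def fullyDyadic (l : List ℕ) : Prop := dyLen l = l.length

/-- Source simplices of type (a) of the bit-chipping field: not fully dyadic, with no
peak, i.e. the dyadic part `a_1 ≤ ⋯ ≤ a_q` is nondecreasing and (if nonempty) its last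
entry is smaller than the breakpoint value `a_{q+1}`. -/
def srcA (l : List ℕ) : Prop :=
  dyLen l < l.length ∧
  (∀ i, i + 1 < dyLen l → l.getD i 0 ≤ l.getD (i + 1) 0) ∧
  (∀ i, i + 1 = dyLen l → l.getD i 0 < l.getD (dyLen l) 0)

/-- The bit-chipping field on a type (a) source: split the breakpoint value `b` into
`lpow b | ltrim b`. -/
def VbcA (l : List ℕ) : List ℕ :=
  l.take (dyLen l) ++ [lpow (l.getD (dyLen l) 0), ltrim (l.getD (dyLen l) 0)] ++
    l.drop (dyLen l + 1)

/-- Source simplices of type (b) of the bit-chipping field: fully dyadic sequences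
`a_1 ≤ ⋯ ≤ a_{k-1} < a_k` with `a_k ≥ 2`. -/
def srcB (l : List ℕ) : Prop :=
  fullyDyadic l ∧ l ≠ [] ∧
  (∀ i, i + 2 < l.length → l.getD i 0 ≤ l.getD (i + 1) 0) ∧
  (∀ i, i + 2 = l.length → l.getD i 0 < l.getD (i + 1) 0) ∧
  2 ≤ l.getD (l.length - 1) 0

/-- The bit-chipping field on a type (b) source: split the last entry into two equal
halves. -/
def VbcB (l : List ℕ) : List ℕ :=
  l.dropLast ++ [l.getD (l.length - 1) 0 / 2, l.getD (l.length - 1) 0 / 2]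

/-- The bit-chipping vector field `V_bc`, as a relation: `VbcRel σ τ` iff `σ` is a
source (of type (a) or (b)) and `τ = V_bc σ`. -/
def VbcRel (σ τ : List ℕ) : Prop :=
  (srcA σ ∧ τ = VbcA σ) ∨ (srcB σ ∧ τ = VbcB σ)

/-- The face operator `∂ᵢ` on a simplex `[a_1 | ⋯ | a_k]` of `K(ℕ,1)`: `∂_0` deletes the
first entry, `∂_k` the last, and for `0 < i < k`, `∂ᵢ` replaces `a_i, a_{i+1}` by their
sum. -/
def faceN (i : ℕ) (l : List ℕ) : List ℕ :=
  if i = 0 then l.tail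
  else if i = l.length then l.dropLast
  else l.take (i - 1) ++ [l.getD (i - 1) 0 + l.getD i 0] ++ l.drop (i + 1)

/-! ### arithmetic helpers -/

def isPow (a : ℕ) : Prop := a = 2 ^ Nat.log 2 a

lemma not_isPow_zero : ¬ isPow 0 := by simp [isPow]

lemma isPow_pos {a : ℕ} (h : isPow a) : 1 ≤ a := by
  rcases Nat.eq_zero_or_pos a with h0 | h1
  · exact absurd (h0 ▸ h) not_isPow_zero
  · exact h1

lemma isPow_pow (m : ℕ) : isPow (2 ^ m) := by
  simp [isPow, Nat.log_pow]

lemma lpow_pos (b : ℕ) : 1 ≤ lpow b := Nat.one_le_two_pow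

lemma lpow_le {b : ℕ} (hb : 1 ≤ b) : lpow b ≤ b := Nat.pow_log_le_self 2 (by omega)

lemma isPow_lpow (b : ℕ) : isPow (lpow b) := isPow_pow _

lemma lpow_add_ltrim {b : ℕ} (hb : 1 ≤ b) : lpow b + ltrim b = b := by
  have := lpow_le hb; simp [ltrim]; omega

lemma ltrim_lt_lpow {b : ℕ} (hb : 1 ≤ b) : ltrim b < lpow b := by
  have h2 : b < 2 ^ (Nat.log 2 b + 1) := Nat.lt_pow_succ_log_self (by norm_num) b
  have : 2 ^ (Nat.log 2 b + 1) = 2 * lpow b := by rw [lpow, pow_succ]; ring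
  have := lpow_le hb
  simp only [ltrim]; omega

lemma isPow_ltrim_eq_zero {b : ℕ} (h : isPow b) : ltrim b = 0 := by
  simp [ltrim, isPow, lpow] at *; omega

lemma ltrim_pos {b : ℕ} (hb : 1 ≤ b) (h : ¬ isPow b) : 1 ≤ ltrim b := by
  rcases Nat.eq_zero_or_pos (ltrim b) with h0 | h1
  · exfalso; apply h; have := lpow_add_ltrim hb; simp only [isPow, lpow] at *; omega
  · exact h1

lemma lpow_lt {b : ℕ} (hb : 1 ≤ b) (h : ¬ isPow b) : lpow b < b := by
  have := lpow_add_ltrim hb; have := ltrim_pos hb h; omega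

lemma lpow_add {c d : ℕ} (hc : isPow c) (hd : 1 ≤ d) (hdc : d < c) :
    lpow (c + d) = c ∧ ltrim (c + d) = d := by
  set m := Nat.log 2 c with hm
  have hc' : c = 2 ^ m := hc
  have hlog : Nat.log 2 (c + d) = m := by
    apply Nat.log_eq_of_pow_le_of_lt_pow
    · omega
    · rw [pow_succ]; omega
  have : lpow (c + d) = c := by rw [lpow, hlog, ← hc']
  refine ⟨this, ?_⟩
  simp [ltrim, this]

lemma not_isPow_add {c d : ℕ} (hc : isPow c) (hd : 1 ≤ d) (hdc : d < c) :
    ¬ isPow (c + d) := by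
  intro h
  have := isPow_ltrim_eq_zero h
  have := (lpow_add hc hd hdc).2
  omega

lemma pow_le_lpow {c b : ℕ} (hc : isPow c) (h : c ≤ b) : c ≤ lpow b := by
  have hc' : c = 2 ^ Nat.log 2 c := hc
  have : Nat.log 2 c ≤ Nat.log 2 b := Nat.log_mono_right h
  calc c = 2 ^ Nat.log 2 c := hc'
    _ ≤ 2 ^ Nat.log 2 b := Nat.pow_le_pow_right (by norm_num) this
    _ = lpow b := rfl

lemma isPow_half {a : ℕ} (ha : isPow a) (h2 : 2 ≤ a) :
    isPow (a / 2) ∧ a / 2 + a / 2 = a ∧ 1 ≤ a / 2 := by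
  have ha' : a = 2 ^ Nat.log 2 a := ha
  set L := Nat.log 2 a with hL
  have hL1 : 1 ≤ L := by
    rcases Nat.eq_zero_or_pos L with h0 | h1
    · rw [h0] at ha'; simp at ha'; omega
    · exact h1
  have key : a = 2 ^ (L - 1) * 2 := by
    rw [ha', ← pow_succ]; congr 1; omega
  have hhalf : a / 2 = 2 ^ (L - 1) := by omega
  exact ⟨hhalf ▸ isPow_pow _, by omega, by rw [hhalf]; exact Nat.one_le_two_pow⟩

lemma isPow_two_mul {t : ℕ} (ht : isPow t) : isPow (2 * t) := by
  have ht' : t = 2 ^ Nat.log 2 t := ht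
  have : 2 * t = 2 ^ (Nat.log 2 t + 1) := by rw [pow_succ]; omega
  rw [this]; exact isPow_pow _

lemma pow_lt_le_half {c a : ℕ} (hc : isPow c) (ha : isPow a) (h2 : 2 ≤ a) (h : c < a) :
    c ≤ a / 2 := by
  obtain ⟨hp, hsum, hpos⟩ := isPow_half ha h2
  have hc' : c = 2 ^ Nat.log 2 c := hc
  have hh' : a / 2 = 2 ^ Nat.log 2 (a / 2) := hp
  have hlt : (2 : ℕ) ^ Nat.log 2 c < 2 ^ (Nat.log 2 (a / 2) + 1) := by
    rw [pow_succ]; omega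
  have hle : Nat.log 2 c < Nat.log 2 (a / 2) + 1 :=
    (Nat.pow_lt_pow_iff_right (by norm_num : 1 < 2)).mp hlt
  calc c = 2 ^ Nat.log 2 c := hc'
    _ ≤ 2 ^ Nat.log 2 (a / 2) := Nat.pow_le_pow_right (by norm_num) (by omega)
    _ = a / 2 := hh'.symm

/-! ### getD helpers -/

lemma getD_drop (l : List ℕ) (n j : ℕ) : (l.drop n).getD j 0 = l.getD (n + j) 0 := by
  simp [List.getD_eq_getElem?_getD, List.getElem?_drop]

lemma getD_take {l : List ℕ} {n j : ℕ} (h : j < n) : (l.take n).getD j 0 = l.getD j 0 := by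
  simp [List.getD_eq_getElem?_getD, List.getElem?_take, h]

lemma getD_tail (l : List ℕ) (j : ℕ) : (l.tail).getD j 0 = l.getD (j + 1) 0 := by
  cases l <;> simp [List.getD_eq_getElem?_getD]

lemma getD_app_left {l l' : List ℕ} {j : ℕ} (h : j < l.length) :
    (l ++ l').getD j 0 = l.getD j 0 := by
  simp [List.getD_eq_getElem?_getD, List.getElem?_append, h]

lemma getD_app_right (l l' : List ℕ) (j : ℕ) :
    (l ++ l').getD (l.length + j) 0 = l'.getD j 0 := by
  simp [List.getD_eq_getElem?_getD, List.getElem?_append_right (Nat.le_add_right _ _)]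

lemma getD_len_le {l : List ℕ} {j : ℕ} (h : l.length ≤ j) : l.getD j 0 = 0 := by
  simp [List.getD_eq_getElem?_getD, List.getElem?_eq_none h]

lemma getD_pos {l : List ℕ} (hp : posL l) {j : ℕ} (h : j < l.length) : 1 ≤ l.getD j 0 := by
  rw [List.getD_eq_getElem l 0 h]
  exact hp _ (List.getElem_mem h)

/-! ### dyLen characterization -/

lemma dyLen_eq_iff (l : List ℕ) (q : ℕ) :
    dyLen l = q ↔ (∀ i, i < q → isPow (l.getD i 0)) ∧ ¬ isPow (l.getD q 0) := by
  induction l generalizing q with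
  | nil =>
    simp only [dyLen, List.takeWhile_nil, List.length_nil]
    constructor
    · rintro rfl
      exact ⟨by omega, by simpa using not_isPow_zero⟩
    · rintro ⟨h1, _⟩
      by_contra hq
      have : isPow ((List.nil : List ℕ).getD 0 0) := h1 0 (by omega)
      simpa using absurd this not_isPow_zero
  | cons a t ih =>
    by_cases ha : isPow a
    · have hb : (a == 2 ^ Nat.log 2 a) = true := by simpa [beq_iff_eq] using (show a = 2 ^ Nat.log 2 a from ha)
      have hd : dyLen (a :: t) = dyLen t + 1 := by
        simp [dyLen, List.takeWhile_cons, hb]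
      rw [hd]
      cases q with
      | zero =>
        simp only [List.getD_cons_zero]
        constructor
        · omega
        · rintro ⟨_, h2⟩; exact absurd ha h2
      | succ q' =>
        rw [Nat.add_right_cancel_iff, ih q']
        constructor
        · rintro ⟨h1, h2⟩
          refine ⟨?_, by simpa using h2⟩
          intro i hi
          cases i with
          | zero => simpa using ha
          | succ i' => simpa using h1 i' (by omega)
        · rintro ⟨h1, h2⟩
          exact ⟨fun i hi => by simpa using h1 (i + 1) (by omega), by simpa using h2⟩
    · have hb : (a == 2 ^ Nat.log 2 a) = false := by
        simp [beq_iff_eq]; intro h; exact absurd h ha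
      have hd : dyLen (a :: t) = 0 := by simp [dyLen, List.takeWhile_cons, hb]
      rw [hd]
      constructor
      · rintro rfl
        exact ⟨by omega, by simpa using ha⟩
      · rintro ⟨h1, _⟩
        by_contra hq
        have : isPow ((a :: t).getD 0 0) := h1 0 (by omega)
        simp at this
        exact ha this

lemma dyLen_spec (l : List ℕ) :
    (∀ i, i < dyLen l → isPow (l.getD i 0)) ∧ ¬ isPow (l.getD (dyLen l) 0) :=
  (dyLen_eq_iff l _).mp rfl

lemma dyLen_le (l : List ℕ) : dyLen l ≤ l.length := by
  by_contra h
  push_neg at h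
  have := (dyLen_spec l).1 l.length h
  rw [getD_len_le (le_refl _)] at this
  exact not_isPow_zero this

lemma dyLen_ge {l : List ℕ} {q : ℕ} (h : ∀ i, i < q → isPow (l.getD i 0)) : q ≤ dyLen l := by
  by_contra hq
  push_neg at hq
  exact (dyLen_spec l).2 (h _ hq)

lemma fullyDyadic_iff (l : List ℕ) :
    fullyDyadic l ↔ ∀ i, i < l.length → isPow (l.getD i 0) := by
  constructor
  · intro h i hi
    exact (dyLen_spec l).1 i (by rw [fullyDyadic] at h; omega)
  · intro h
    have h1 := dyLen_ge h
    have h2 := dyLen_le l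
    rw [fullyDyadic]; omega

/-! ### decomposition helpers -/

lemma len_take {l : List ℕ} {q : ℕ} (h : q ≤ l.length) : (l.take q).length = q := by
  simp [List.length_take]; omega

lemma decomp_at {l : List ℕ} {q : ℕ} (h : q < l.length) :
    l = l.take q ++ l.getD q 0 :: l.drop (q + 1) := by
  conv_lhs => rw [← List.take_append_drop q l]
  congr 1
  rw [List.drop_eq_getElem_cons h, List.getD_eq_getElem l 0 h]

lemma getD_app_right' {A C : List ℕ} {j n : ℕ} (hA : A.length = n) (h : n ≤ j) :
    (A ++ C).getD j 0 = C.getD (j - n) 0 := by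
  have h2 := getD_app_right A C (j - n)
  rw [hA, show n + (j - n) = j from by omega] at h2
  exact h2

lemma drop_app {A C : List ℕ} {j n : ℕ} (hA : A.length = n) (h : n ≤ j) :
    (A ++ C).drop j = C.drop (j - n) := by
  have h2 : (A ++ C).drop (A.length + (j - n)) = C.drop (j - n) := by simp
  rwa [hA, show n + (j - n) = j from by omega] at h2

/-! ### VbcA facts -/

section VbcAFacts

variable {σ : List ℕ}

lemma VbcA_decomp (hq : dyLen σ < σ.length) :
    VbcA σ = σ.take (dyLen σ) ++ lpow (σ.getD (dyLen σ) 0) ::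
      ltrim (σ.getD (dyLen σ) 0) :: σ.drop (dyLen σ + 1) := by
  simp [VbcA]

lemma VbcA_len (hq : dyLen σ < σ.length) : (VbcA σ).length = σ.length + 1 := by
  rw [VbcA_decomp hq]
  simp [List.length_append, List.length_take, List.length_drop]
  omega

lemma VbcA_getD_lt (hq : dyLen σ < σ.length) {j : ℕ} (hj : j < dyLen σ) :
    (VbcA σ).getD j 0 = σ.getD j 0 := by
  rw [VbcA_decomp hq, getD_app_left (by rw [len_take (le_of_lt hq)]; omega), getD_take hj]

lemma VbcA_getD_q (hq : dyLen σ < σ.length) :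
    (VbcA σ).getD (dyLen σ) 0 = lpow (σ.getD (dyLen σ) 0) := by
  rw [VbcA_decomp hq, getD_app_right' (len_take (le_of_lt hq)) (le_refl _)]
  simp

lemma VbcA_getD_q1 (hq : dyLen σ < σ.length) :
    (VbcA σ).getD (dyLen σ + 1) 0 = ltrim (σ.getD (dyLen σ) 0) := by
  rw [VbcA_decomp hq, getD_app_right' (len_take (le_of_lt hq)) (by omega),
    show dyLen σ + 1 - dyLen σ = 1 from by omega]
  simp

lemma VbcA_posL (hq : dyLen σ < σ.length) (hp : posL σ) : posL (VbcA σ) := by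
  intro x hx
  rw [VbcA_decomp hq] at hx
  have hb : 1 ≤ σ.getD (dyLen σ) 0 := getD_pos hp hq
  have hnb : ¬ isPow (σ.getD (dyLen σ) 0) := (dyLen_spec σ).2
  simp only [List.mem_append, List.mem_cons] at hx
  rcases hx with h | h
  · exact hp x (List.mem_of_mem_take h)
  · rcases h with h | h | h
    · rw [h]; exact lpow_pos _
    · rw [h]; exact ltrim_pos hb hnb
    · exact hp x (List.mem_of_mem_drop h)

lemma VbcA_dyLen (hq : dyLen σ < σ.length) : dyLen σ + 1 ≤ dyLen (VbcA σ) := by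
  apply dyLen_ge
  intro i hi
  rcases Nat.lt_or_ge i (dyLen σ) with h | h
  · rw [VbcA_getD_lt hq h]; exact (dyLen_spec σ).1 i h
  · have : i = dyLen σ := by omega
    rw [this, VbcA_getD_q hq]; exact isPow_lpow _

lemma VbcA_descent (hq : dyLen σ < σ.length) (hp : posL σ) :
    (VbcA σ).getD (dyLen σ + 1) 0 < (VbcA σ).getD (dyLen σ) 0 := by
  rw [VbcA_getD_q hq, VbcA_getD_q1 hq]
  exact ltrim_lt_lpow (getD_pos hp hq)

lemma VbcA_recover (hq : dyLen σ < σ.length) (hp : posL σ) :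
    σ = (VbcA σ).take (dyLen σ) ++
      ((VbcA σ).getD (dyLen σ) 0 + (VbcA σ).getD (dyLen σ + 1) 0) ::
        (VbcA σ).drop (dyLen σ + 2) := by
  have hb : 1 ≤ σ.getD (dyLen σ) 0 := getD_pos hp hq
  have h1 : (VbcA σ).take (dyLen σ) = σ.take (dyLen σ) := by
    rw [VbcA_decomp hq]
    exact List.take_left' (len_take (le_of_lt hq))
  have h2 : (VbcA σ).drop (dyLen σ + 2) = σ.drop (dyLen σ + 1) := by
    rw [VbcA_decomp hq, drop_app (len_take (le_of_lt hq)) (by omega),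
      show dyLen σ + 2 - dyLen σ = 2 from by omega]
    simp
  rw [h1, h2, VbcA_getD_q hq, VbcA_getD_q1 hq, lpow_add_ltrim hb]
  exact decomp_at hq

lemma VbcA_mono (h : srcA σ) (hp : posL σ) :
    ∀ j, j + 1 ≤ dyLen σ → (VbcA σ).getD j 0 ≤ (VbcA σ).getD (j + 1) 0 := by
  obtain ⟨hq, hm, hbr⟩ := h
  intro j hj
  rcases Nat.lt_or_ge (j + 1) (dyLen σ) with h1 | h1
  · rw [VbcA_getD_lt hq (by omega), VbcA_getD_lt hq h1]
    exact hm j h1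
  · have hq1 : 1 ≤ dyLen σ := by omega
    have hjval : j = dyLen σ - 1 := by omega
    rw [hjval, VbcA_getD_lt hq (by omega), show dyLen σ - 1 + 1 = dyLen σ from by omega,
      VbcA_getD_q hq]
    have hlt : σ.getD (dyLen σ - 1) 0 < σ.getD (dyLen σ) 0 := hbr _ (by omega)
    exact pow_le_lpow ((dyLen_spec σ).1 _ (by omega)) (le_of_lt hlt)

end VbcAFacts

/-! ### VbcB facts -/

section VbcBFacts

variable {σ : List ℕ}

lemma dropLast_decomp (hne : σ ≠ []) :
    σ = σ.dropLast ++ [σ.getD (σ.length - 1) 0] := by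
  have hk : 1 ≤ σ.length := List.length_pos_iff.mpr hne
  conv_lhs => rw [decomp_at (show σ.length - 1 < σ.length from by omega)]
  rw [show σ.length - 1 + 1 = σ.length from by omega, List.drop_length,
    List.dropLast_eq_take]

lemma VbcB_len (hne : σ ≠ []) : (VbcB σ).length = σ.length + 1 := by
  have hk : 1 ≤ σ.length := List.length_pos_iff.mpr hne
  simp only [VbcB, List.length_append, List.length_dropLast]
  simp; omega

lemma VbcB_getD_lt (hne : σ ≠ []) {j : ℕ} (hj : j < σ.length - 1) :
    (VbcB σ).getD j 0 = σ.getD j 0 := by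
  simp only [VbcB]
  rw [getD_app_left (by rw [List.length_dropLast]; omega), List.dropLast_eq_take,
    getD_take hj]

lemma VbcB_getD_last1 (hne : σ ≠ []) :
    (VbcB σ).getD (σ.length - 1) 0 = σ.getD (σ.length - 1) 0 / 2 := by
  simp only [VbcB]
  rw [getD_app_right' ((List.length_dropLast (xs := σ))) (le_refl _), Nat.sub_self]
  simp

lemma VbcB_getD_last2 (hne : σ ≠ []) :
    (VbcB σ).getD σ.length 0 = σ.getD (σ.length - 1) 0 / 2 := by
  have hk : 1 ≤ σ.length := List.length_pos_iff.mpr hne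
  simp only [VbcB]
  rw [getD_app_right' ((List.length_dropLast (xs := σ))) (by omega),
    show σ.length - (σ.length - 1) = 1 from by omega]
  simp

lemma srcB_a_pow (hB : srcB σ) : isPow (σ.getD (σ.length - 1) 0) := by
  obtain ⟨hfd, hne, _, _, _⟩ := hB
  have hk : 1 ≤ σ.length := List.length_pos_iff.mpr hne
  exact (fullyDyadic_iff σ).mp hfd _ (by omega)

lemma VbcB_posL (hB : srcB σ) (hp : posL σ) : posL (VbcB σ) := by
  obtain ⟨hfd, hne, _, _, h2⟩ := hB
  obtain ⟨htpow, htsum, htpos⟩ := isPow_half (srcB_a_pow ⟨hfd, hne, by tauto, by tauto, h2⟩) h2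
  intro x hx
  simp only [VbcB, List.mem_append, List.mem_cons, List.not_mem_nil, or_false] at hx
  rcases hx with h | h | h
  · rw [List.dropLast_eq_take] at h
    exact hp x (List.mem_of_mem_take h)
  · rw [h]; exact htpos
  · rw [h]; exact htpos

lemma VbcB_fullyDyadic (hB : srcB σ) : fullyDyadic (VbcB σ) := by
  obtain ⟨hfd, hne, _, _, h2⟩ := hB
  have hk : 1 ≤ σ.length := List.length_pos_iff.mpr hne
  obtain ⟨htpow, htsum, htpos⟩ := isPow_half (srcB_a_pow ⟨hfd, hne, by tauto, by tauto, h2⟩) h2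
  rw [fullyDyadic_iff]
  intro i hi
  rw [VbcB_len hne] at hi
  rcases Nat.lt_or_ge i (σ.length - 1) with h | h
  · rw [VbcB_getD_lt hne h]
    exact (fullyDyadic_iff σ).mp hfd i (by omega)
  · rcases Nat.lt_or_ge i σ.length with h' | h'
    · rw [show i = σ.length - 1 from by omega, VbcB_getD_last1 hne]; exact htpow
    · rw [show i = σ.length from by omega, VbcB_getD_last2 hne]; exact htpow

lemma VbcB_mono (hB : srcB σ) : ∀ j, j + 1 < (VbcB σ).length →
    (VbcB σ).getD j 0 ≤ (VbcB σ).getD (j + 1) 0 := by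
  obtain ⟨hfd, hne, hN1, hN2, h2⟩ := hB
  have hk : 1 ≤ σ.length := List.length_pos_iff.mpr hne
  have hapow := srcB_a_pow ⟨hfd, hne, hN1, hN2, h2⟩
  obtain ⟨htpow, htsum, htpos⟩ := isPow_half hapow h2
  intro j hj
  rw [VbcB_len hne] at hj
  rcases Nat.lt_or_ge (j + 1) (σ.length - 1) with h | h
  · rw [VbcB_getD_lt hne (by omega), VbcB_getD_lt hne h]
    exact hN1 j (by omega)
  · rcases Nat.lt_or_ge j (σ.length - 1) with h' | h'
    · -- j + 1 = σ.length - 1, so σ.length ≥ 2 and j = σ.length - 2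
      have hk2 : 2 ≤ σ.length := by omega
      rw [VbcB_getD_lt hne h', show j + 1 = σ.length - 1 from by omega,
        VbcB_getD_last1 hne]
      have hlt : σ.getD j 0 < σ.getD (σ.length - 1) 0 := by
        have := hN2 j (by omega)
        rwa [show j + 1 = σ.length - 1 from by omega] at this
      exact pow_lt_le_half ((fullyDyadic_iff σ).mp hfd j (by omega)) hapow h2 hlt
    · -- j = σ.length - 1
      rw [show j = σ.length - 1 from by omega, VbcB_getD_last1 hne,
        show σ.length - 1 + 1 = σ.length from by omega, VbcB_getD_last2 hne]

lemma VbcB_recover (hB : srcB σ) :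
    σ = (VbcB σ).take (σ.length - 1) ++
      [(VbcB σ).getD σ.length 0 + (VbcB σ).getD σ.length 0] := by
  obtain ⟨hfd, hne, hN1, hN2, h2⟩ := hB
  have hapow := srcB_a_pow ⟨hfd, hne, hN1, hN2, h2⟩
  obtain ⟨htpow, htsum, htpos⟩ := isPow_half hapow h2
  have h1 : (VbcB σ).take (σ.length - 1) = σ.dropLast := by
    simp only [VbcB]
    exact List.take_left' ((List.length_dropLast (xs := σ)))
  rw [h1, VbcB_getD_last2 hne, htsum]
  exact dropLast_decomp hne

end VbcBFacts

/-! ### exclusivity, functionality, injectivity -/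

lemma drop_cons {l : List ℕ} {q : ℕ} (h : q < l.length) :
    l.drop q = l.getD q 0 :: l.drop (q + 1) := by
  rw [List.drop_eq_getElem_cons h, List.getD_eq_getElem l 0 h]

lemma src_mono {l : List ℕ} (h : srcA l ∨ srcB l) (j : ℕ) (h1 : j + 1 < l.length)
    (h2 : j + 1 ≤ dyLen l) : l.getD j 0 ≤ l.getD (j + 1) 0 := by
  rcases h with ⟨hq, hm, hbr⟩ | ⟨hfd, hne, hN1, hN2, h2'⟩
  · rcases Nat.lt_or_ge (j + 1) (dyLen l) with h | h
    · exact hm j h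
    · have he : j + 1 = dyLen l := by omega
      have h3 := hbr j he
      rw [← he] at h3
      exact le_of_lt h3
  · rcases Nat.lt_or_ge (j + 2) l.length with h | h
    · exact hN1 j h
    · exact le_of_lt (hN2 j (by omega))

lemma not_both {l : List ℕ} (hsrc : srcA l ∨ srcB l) {σ : List ℕ} (hp : posL σ)
    (hrel : VbcRel σ l) : False := by
  rcases hrel with ⟨hA, rfl⟩ | ⟨hB, rfl⟩
  · have hq := hA.1
    have hd := VbcA_descent hq hp
    have hdy := VbcA_dyLen hq
    have hlen := VbcA_len hq
    have := src_mono hsrc (dyLen σ) (by omega) (by omega)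
    omega
  · have hne := hB.2.1
    have hk : 1 ≤ σ.length := List.length_pos_iff.mpr hne
    have hfd := VbcB_fullyDyadic hB
    rcases hsrc with ⟨hq, _, _⟩ | ⟨_, _, _, hN2, _⟩
    · rw [fullyDyadic] at hfd; omega
    · have h1 := hN2 (σ.length - 1) (by rw [VbcB_len hne]; omega)
      rw [show σ.length - 1 + 1 = σ.length from by omega, VbcB_getD_last1 hne,
        VbcB_getD_last2 hne] at h1
      omega

lemma srcA_srcB_false {σ : List ℕ} (hA : srcA σ) (hB : srcB σ) : False := by
  have h1 := hA.1
  have h2 := hB.1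
  rw [fullyDyadic] at h2
  omega

lemma Vbc_inj {σ σ' τ : List ℕ} (hp : posL σ) (hp' : posL σ')
    (h : VbcRel σ τ) (h' : VbcRel σ' τ) : σ = σ' := by
  rcases h with ⟨hA, rfl⟩ | ⟨hB, rfl⟩
  · rcases h' with ⟨hA', heq⟩ | ⟨hB', heq⟩
    · -- both type (a)
      have hq := hA.1
      have hq' := hA'.1
      have hdy : dyLen σ = dyLen σ' := by
        rcases Nat.lt_trichotomy (dyLen σ) (dyLen σ') with h | h | h
        · have hd := VbcA_descent hq hp
          have hm := VbcA_mono hA' hp' (dyLen σ) (by omega)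
          rw [← heq] at hm
          omega
        · exact h
        · have hd := VbcA_descent hq' hp'
          have hm := VbcA_mono hA hp (dyLen σ') (by omega)
          rw [← heq] at hd
          omega
      rw [VbcA_recover hq hp, VbcA_recover hq' hp', ← heq, hdy]
    · -- σ type (a), σ' type (b): impossible
      exfalso
      have hq := hA.1
      have hd := VbcA_descent hq hp
      have hm := VbcB_mono hB' (dyLen σ)
        (by rw [← heq, VbcA_len hq]; omega)
      rw [← heq] at hm
      omega
  · rcases h' with ⟨hA', heq⟩ | ⟨hB', heq⟩
    · -- σ type (b), σ' type (a): impossible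
      exfalso
      have hq := hA'.1
      have hd := VbcA_descent hq hp'
      have hm := VbcB_mono hB (dyLen σ')
        (by rw [heq, VbcA_len hq]; omega)
      rw [← heq] at hd
      omega
    · -- both type (b)
      have hne := hB.2.1
      have hne' := hB'.2.1
      have hlen : σ.length = σ'.length := by
        have := VbcB_len hne
        have := VbcB_len hne'
        rw [← heq] at *
        omega
      rw [VbcB_recover hB, VbcB_recover hB', ← heq, hlen]

/-! ### preimage construction -/

lemma preimage_descent {l : List ℕ} (hl : posL l) {p : ℕ} (hp1 : 1 ≤ p)
    (hpq : p ≤ dyLen l) (hpk : p < l.length)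
    (hmono : ∀ j, j + 1 < p → l.getD j 0 ≤ l.getD (j + 1) 0)
    (hdesc : l.getD p 0 < l.getD (p - 1) 0) :
    ∃ σ, posL σ ∧ VbcRel σ l := by
  have hcpow : isPow (l.getD (p - 1) 0) := (dyLen_spec l).1 (p - 1) (by omega)
  have hdpos : 1 ≤ l.getD p 0 := getD_pos hl hpk
  obtain ⟨hlp, hlt⟩ := lpow_add hcpow hdpos hdesc
  have hnb : ¬ isPow (l.getD (p - 1) 0 + l.getD p 0) := not_isPow_add hcpow hdpos hdesc
  set c := l.getD (p - 1) 0 with hc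
  set d := l.getD p 0 with hd
  set σ := l.take (p - 1) ++ (c + d) :: l.drop (p + 1) with hσ
  have hT : (l.take (p - 1)).length = p - 1 := len_take (by omega)
  have hσlen : σ.length = l.length - 1 := by
    rw [hσ]; simp only [List.length_append, List.length_cons, List.length_drop, hT]; omega
  have hgd_lt : ∀ j, j < p - 1 → σ.getD j 0 = l.getD j 0 := fun j hj => by
    rw [hσ, getD_app_left (by omega), getD_take hj]
  have hgd_p : σ.getD (p - 1) 0 = c + d := by
    rw [hσ, getD_app_right' hT (le_refl _), Nat.sub_self]; rfl
  have hdyσ : dyLen σ = p - 1 := by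
    rw [dyLen_eq_iff]
    refine ⟨fun i hi => ?_, ?_⟩
    · rw [hgd_lt i hi]; exact (dyLen_spec l).1 i (by omega)
    · rw [hgd_p]; exact hnb
  have hsrc : srcA σ := by
    refine ⟨by omega, fun i hi => ?_, fun i hi => ?_⟩
    · rw [hdyσ] at hi
      rw [hgd_lt i (by omega), hgd_lt (i + 1) (by omega)]
      exact hmono i (by omega)
    · rw [hdyσ] at hi
      rw [hdyσ, hgd_p, hgd_lt i (by omega)]
      have h1 : l.getD i 0 ≤ l.getD (i + 1) 0 := hmono i (by omega)
      rw [show i + 1 = p - 1 from by omega] at h1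
      omega
  have hpos : posL σ := by
    intro x hx
    rw [hσ] at hx
    simp only [List.mem_append, List.mem_cons] at hx
    rcases hx with h | h | h
    · exact hl x (List.mem_of_mem_take h)
    · have : 1 ≤ c := isPow_pos hcpow
      omega
    · exact hl x (List.mem_of_mem_drop h)
  refine ⟨σ, hpos, Or.inl ⟨hsrc, ?_⟩⟩
  rw [VbcA_decomp (by omega), hdyσ, hgd_p, hlp, hlt]
  have h1 : σ.take (p - 1) = l.take (p - 1) := by rw [hσ]; exact List.take_left' hT
  have h2 : σ.drop (p - 1 + 1) = l.drop (p + 1) := by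
    rw [hσ, drop_app hT (by omega), show p - 1 + 1 - (p - 1) = 1 from by omega]
    rfl
  rw [h1, h2]
  conv_lhs => rw [decomp_at (show p - 1 < l.length from by omega)]
  rw [show p - 1 + 1 = p from by omega, drop_cons hpk, ← hc, ← hd]

lemma preimage_plateau {l : List ℕ} (hl : posL l) (hfd : fullyDyadic l) (hk2 : 2 ≤ l.length)
    (hmono : ∀ j, j + 1 < l.length → l.getD j 0 ≤ l.getD (j + 1) 0)
    (heq : l.getD (l.length - 2) 0 = l.getD (l.length - 1) 0) :
    ∃ σ, posL σ ∧ VbcRel σ l := by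
  have htpos : 1 ≤ l.getD (l.length - 1) 0 := getD_pos hl (by omega)
  have htpow : isPow (l.getD (l.length - 1) 0) := (fullyDyadic_iff l).mp hfd _ (by omega)
  have h2t : isPow (2 * l.getD (l.length - 1) 0) := isPow_two_mul htpow
  set t := l.getD (l.length - 1) 0 with ht
  set σ := l.take (l.length - 2) ++ [2 * t] with hσ
  have hT : (l.take (l.length - 2)).length = l.length - 2 := len_take (by omega)
  have hσlen : σ.length = l.length - 1 := by
    rw [hσ]; simp only [List.length_append, List.length_cons, List.length_nil, hT]; omega
  have hgd_lt : ∀ j, j < l.length - 2 → σ.getD j 0 = l.getD j 0 := fun j hj => by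
    rw [hσ, getD_app_left (by omega), getD_take hj]
  have hgd_last : σ.getD (l.length - 2) 0 = 2 * t := by
    rw [hσ, getD_app_right' hT (le_refl _), Nat.sub_self]; rfl
  have hσfd : fullyDyadic σ := by
    rw [fullyDyadic_iff]
    intro i hi
    rw [hσlen] at hi
    rcases Nat.lt_or_ge i (l.length - 2) with h | h
    · rw [hgd_lt i h]; exact (fullyDyadic_iff l).mp hfd i (by omega)
    · rw [show i = l.length - 2 from by omega, hgd_last]; exact h2t
  have hsrc : srcB σ := by
    refine ⟨hσfd, ?_, fun i hi => ?_, fun i hi => ?_, ?_⟩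
    · intro h; rw [h] at hσlen; simp at hσlen; omega
    · rw [hσlen] at hi
      rw [hgd_lt i (by omega), hgd_lt (i + 1) (by omega)]
      exact hmono i (by omega)
    · rw [hσlen] at hi
      rw [hgd_lt i (by omega), show i + 1 = l.length - 2 from by omega, hgd_last]
      have h1 := hmono i (by omega)
      rw [show i + 1 = l.length - 2 from by omega] at h1
      omega
    · rw [hσlen, show l.length - 1 - 1 = l.length - 2 from by omega, hgd_last]; omega
  have hpos : posL σ := by
    intro x hx
    rw [hσ] at hx
    simp only [List.mem_append, List.mem_cons, List.not_mem_nil, or_false] at hx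
    rcases hx with h | h
    · exact hl x (List.mem_of_mem_take h)
    · omega
  refine ⟨σ, hpos, Or.inr ⟨hsrc, ?_⟩⟩
  have hdl : σ.dropLast = l.take (l.length - 2) := by
    rw [hσ]; simp
  have hlastσ : σ.getD (σ.length - 1) 0 = 2 * t := by
    rw [hσlen, show l.length - 1 - 1 = l.length - 2 from by omega, hgd_last]
  simp only [VbcB]
  rw [hdl, hlastσ, show 2 * t / 2 = t from by omega]
  conv_lhs => rw [decomp_at (show l.length - 2 < l.length from by omega)]
  rw [show l.length - 2 + 1 = l.length - 1 from by omega,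
    drop_cons (show l.length - 1 < l.length from by omega),
    show l.length - 1 + 1 = l.length from by omega, List.drop_length, ← ht]
  have : l.getD (l.length - 2) 0 = t := heq
  rw [this]

lemma exists_preimage {l : List ℕ} (hl : posL l) (hne : l ≠ []) (hne1 : l ≠ [1])
    (hnA : ¬ srcA l) (hnB : ¬ srcB l) : ∃ σ, posL σ ∧ VbcRel σ l := by
  classical
  have hk : 1 ≤ l.length := List.length_pos_iff.mpr hne
  by_cases hM : ∀ j, j + 1 < dyLen l → l.getD j 0 ≤ l.getD (j + 1) 0
  · rcases Nat.lt_or_ge (dyLen l) l.length with hq | hq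
    · have hbr : ¬ ∀ i, i + 1 = dyLen l → l.getD i 0 < l.getD (dyLen l) 0 := fun h =>
        hnA ⟨hq, hM, h⟩
      push_neg at hbr
      obtain ⟨i, hi1, hi2⟩ := hbr
      have hnotpow : ¬ isPow (l.getD (dyLen l) 0) := (dyLen_spec l).2
      have hipow : isPow (l.getD i 0) := (dyLen_spec l).1 i (by omega)
      have hdesc : l.getD (dyLen l) 0 < l.getD (dyLen l - 1) 0 := by
        have hneq : l.getD i 0 ≠ l.getD (dyLen l) 0 := by
          intro h; rw [h] at hipow; exact hnotpow hipow
        rw [show dyLen l - 1 = i from by omega]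
        omega
      exact preimage_descent hl (p := dyLen l) (by omega) (le_refl _) hq hM hdesc
    · have hqlen : dyLen l = l.length := le_antisymm (dyLen_le l) hq
      have hfd : fullyDyadic l := hqlen
      rcases Nat.lt_or_ge l.length 2 with hk2 | hk2
      · exfalso
        obtain ⟨x, hx⟩ := List.length_eq_one_iff.mp (by omega : l.length = 1)
        subst hx
        have hx1 : 1 ≤ x := hl x (by simp)
        rcases Nat.lt_or_ge x 2 with h2 | h2
        · exact hne1 (by rw [show x = 1 from by omega])
        · exact hnB ⟨hfd, by simp, fun i hi => by simp only [List.length_singleton] at hi; omega,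
            fun i hi => by simp only [List.length_singleton] at hi; omega, by simpa using h2⟩
      · have hmono' : ∀ j, j + 1 < l.length → l.getD j 0 ≤ l.getD (j + 1) 0 := fun j hj =>
          hM j (by omega)
        have heq : l.getD (l.length - 2) 0 = l.getD (l.length - 1) 0 := by
          have hle : l.getD (l.length - 2) 0 ≤ l.getD (l.length - 1) 0 := by
            have := hmono' (l.length - 2) (by omega)
            rwa [show l.length - 2 + 1 = l.length - 1 from by omega] at this
          by_contra hneq
          apply hnB
          refine ⟨hfd, hne, fun i hi => hmono' i (by omega), fun i hi => ?_, ?_⟩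
          · rw [show i = l.length - 2 from by omega,
              show l.length - 2 + 1 = l.length - 1 from by omega]
            omega
          · have h1 : 1 ≤ l.getD (l.length - 2) 0 := getD_pos hl (by omega)
            omega
        exact preimage_plateau hl hfd hk2 hmono' heq
  · push_neg at hM
    have hex : ∃ i, i + 1 < dyLen l ∧ l.getD (i + 1) 0 < l.getD i 0 := by
      obtain ⟨i, h1, h2⟩ := hM; exact ⟨i, h1, by omega⟩
    obtain ⟨hi1, hi2⟩ := Nat.find_spec hex
    have hmin := fun j (hj : j < Nat.find hex) => Nat.find_min hex hj
    apply preimage_descent hl (p := Nat.find hex + 1) (by omega) (by omega)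
      (by have := dyLen_le l; omega) ?_ (by simpa using hi2)
    intro j hj
    have h3 := hmin j (by omega)
    push_neg at h3
    exact h3 (by omega)

/-! ### faceN computations -/

lemma faceN_getD_zero (l : List ℕ) (j : ℕ) : (faceN 0 l).getD j 0 = l.getD (j + 1) 0 := by
  simp only [faceN, if_pos rfl]
  exact getD_tail l j

lemma faceN_getD_ge {l : List ℕ} {i j : ℕ} (hi0 : i ≠ 0) (hil : i < l.length) (hij : i ≤ j) :
    (faceN i l).getD j 0 = l.getD (j + 1) 0 := by
  simp only [faceN, if_neg hi0, if_neg (by omega : i ≠ l.length)]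
  have hT : (l.take (i - 1) ++ [l.getD (i - 1) 0 + l.getD i 0]).length = i := by
    simp [len_take (show i - 1 ≤ l.length from by omega)]; omega
  rw [getD_app_right' hT hij, getD_drop]
  congr 1
  omega

lemma faceN_getD_lt {l : List ℕ} {i j : ℕ} (hi0 : i ≠ 0) (hil : i ≤ l.length)
    (hij : j < i - 1) : (faceN i l).getD j 0 = l.getD j 0 := by
  by_cases hle : i = l.length
  · simp only [faceN, if_neg hi0, if_pos hle]
    rw [List.dropLast_eq_take, getD_take (by omega)]
  · simp only [faceN, if_neg hi0, if_neg hle]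
    have hA : (l.take (i - 1)).length = i - 1 := len_take (by omega)
    rw [getD_app_left (by simp [hA]; omega), getD_app_left (by omega), getD_take hij]

lemma faceN_VbcA {σ : List ℕ} (hq : dyLen σ < σ.length) (hp : posL σ) :
    faceN (dyLen σ + 1) (VbcA σ) = σ := by
  have hlen := VbcA_len hq
  simp only [faceN, if_neg (by omega : dyLen σ + 1 ≠ 0),
    if_neg (by omega : dyLen σ + 1 ≠ (VbcA σ).length)]
  rw [show dyLen σ + 1 - 1 = dyLen σ from rfl, show dyLen σ + 1 + 1 = dyLen σ + 2 from rfl]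
  conv_rhs => rw [VbcA_recover hq hp]
  simp

lemma faceN_VbcB {σ : List ℕ} (hB : srcB σ) : faceN σ.length (VbcB σ) = σ := by
  have hne := hB.2.1
  have hk : 1 ≤ σ.length := List.length_pos_iff.mpr hne
  have hlen := VbcB_len hne
  simp only [faceN, if_neg (by omega : σ.length ≠ 0),
    if_neg (by omega : σ.length ≠ (VbcB σ).length)]
  have hdrop : (VbcB σ).drop (σ.length + 1) = [] := by
    rw [← hlen]; exact List.drop_length
  have heq2 : (VbcB σ).getD (σ.length - 1) 0 = (VbcB σ).getD σ.length 0 := by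
    rw [VbcB_getD_last1 hne, VbcB_getD_last2 hne]
  rw [hdrop, heq2, List.append_nil]
  exact (VbcB_recover hB).symm

lemma regular_face {σ τ : List ℕ} (hp : posL σ) (hrel : VbcRel σ τ) :
    ∃! i : ℕ, i ≤ τ.length ∧ faceN i τ = σ := by
  rcases hrel with ⟨hA, rfl⟩ | ⟨hB, rfl⟩
  · -- type (a)
    have hq := hA.1
    have hlen := VbcA_len hq
    have hb : 1 ≤ σ.getD (dyLen σ) 0 := getD_pos hp hq
    have hnb : ¬ isPow (σ.getD (dyLen σ) 0) := (dyLen_spec σ).2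
    have hlp : lpow (σ.getD (dyLen σ) 0) < σ.getD (dyLen σ) 0 := lpow_lt hb hnb
    have hlt : ltrim (σ.getD (dyLen σ) 0) < σ.getD (dyLen σ) 0 := by
      have := lpow_pos (σ.getD (dyLen σ) 0)
      have := lpow_add_ltrim hb
      omega
    refine ⟨dyLen σ + 1, ⟨by omega, faceN_VbcA hq hp⟩, ?_⟩
    rintro i ⟨hile, hieq⟩
    by_contra hne'
    have key : (faceN i (VbcA σ)).getD (dyLen σ) 0 = σ.getD (dyLen σ) 0 := by rw [hieq]
    rcases Nat.eq_zero_or_pos i with hi0 | hi0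
    · rw [hi0, faceN_getD_zero, VbcA_getD_q1 hq] at key
      omega
    · rcases Nat.lt_or_ge i (dyLen σ + 1) with h | h
      · rw [faceN_getD_ge (by omega) (by omega) (by omega), VbcA_getD_q1 hq] at key
        omega
      · rw [faceN_getD_lt (by omega) hile (by omega), VbcA_getD_q hq] at key
        omega
  · -- type (b)
    have hne := hB.2.1
    have hk : 1 ≤ σ.length := List.length_pos_iff.mpr hne
    have hlen := VbcB_len hne
    have h2 := hB.2.2.2.2
    obtain ⟨htpow, htsum, htpos⟩ := isPow_half (srcB_a_pow hB) h2
    have hσlast : σ.getD (σ.length - 1) 0 = σ.getD (σ.length - 1) 0 := rfl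
    refine ⟨σ.length, ⟨by omega, faceN_VbcB hB⟩, ?_⟩
    rintro i ⟨hile, hieq⟩
    by_contra hne'
    have key : (faceN i (VbcB σ)).getD (σ.length - 1) 0 = σ.getD (σ.length - 1) 0 := by
      rw [hieq]
    rcases Nat.eq_zero_or_pos i with hi0 | hi0
    · rw [hi0, faceN_getD_zero, show σ.length - 1 + 1 = σ.length from by omega,
        VbcB_getD_last2 hne] at key
      omega
    · rcases Nat.lt_or_ge i σ.length with h | h
      · rw [faceN_getD_ge (by omega) (by omega) (by omega),
          show σ.length - 1 + 1 = σ.length from by omega, VbcB_getD_last2 hne] at key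
        omega
      · rw [faceN_getD_lt (by omega) hile (by omega), VbcB_getD_last1 hne] at key
        omega


/-- The bit-chipping field is a valid discrete vector field on `K(ℕ,1)` whose only
critical simplices are `[]` and `[1]`: every nondegenerate simplex other than `[]` and
`[1]` is a source iff it is not a target (so it is exactly one of the two), `[]` and
`[1]` are neither sources nor targets, the matching is a bijection between sources and
targets, and each source is a regular face of its matched target. -/
theorem stmt15 :
    (∀ l : List ℕ, posL l → l ≠ [] → l ≠ [1] →
      ((∃ τ, VbcRel l τ) ↔ ¬ ∃ σ, posL σ ∧ VbcRel σ l)) ∧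
    (¬ ∃ τ, VbcRel [] τ) ∧ (¬ ∃ σ, posL σ ∧ VbcRel σ []) ∧
    (¬ ∃ τ, VbcRel [1] τ) ∧ (¬ ∃ σ, posL σ ∧ VbcRel σ [1]) ∧
    (∀ σ σ' τ, posL σ → posL σ' → VbcRel σ τ → VbcRel σ' τ → σ = σ') ∧
    (∀ σ τ τ', VbcRel σ τ → VbcRel σ τ' → τ = τ') ∧
    (∀ σ τ, posL σ → VbcRel σ τ → ∃! i : ℕ, i ≤ τ.length ∧ faceN i τ = σ) := by
  refine ⟨?_, ?_, ?_, ?_, ?_, ?_, ?_, ?_⟩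
  · -- source iff not target
    intro l hl hne hne1
    constructor
    · rintro ⟨τ, hrel⟩ ⟨σ, hpσ, hrelσ⟩
      have hsrc : srcA l ∨ srcB l := by
        rcases hrel with ⟨h, _⟩ | ⟨h, _⟩
        · exact Or.inl h
        · exact Or.inr h
      exact not_both hsrc hpσ hrelσ
    · intro h
      by_cases hA : srcA l
      · exact ⟨VbcA l, Or.inl ⟨hA, rfl⟩⟩
      by_cases hB : srcB l
      · exact ⟨VbcB l, Or.inr ⟨hB, rfl⟩⟩
      exact absurd (exists_preimage hl hne hne1 hA hB) h
  · -- [] is not a source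
    rintro ⟨τ, ⟨hA, _⟩ | ⟨hB, _⟩⟩
    · have := hA.1; simp [dyLen] at this
    · exact hB.2.1 rfl
  · -- [] is not a target
    rintro ⟨σ, hpσ, ⟨hA, heq⟩ | ⟨hB, heq⟩⟩
    · have h1 := VbcA_len hA.1
      rw [← heq] at h1
      simp at h1
    · have h1 := VbcB_len hB.2.1
      rw [← heq] at h1
      simp at h1
  · -- [1] is not a source
    rintro ⟨τ, ⟨hA, _⟩ | ⟨hB, _⟩⟩
    · have hd : dyLen [1] = 1 := by
        rw [dyLen_eq_iff]
        refine ⟨fun i hi => ?_, ?_⟩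
        · rw [show i = 0 from by omega]
          simpa using isPow_pow 0
        · simpa using not_isPow_zero
      have := hA.1
      rw [hd] at this
      simp at this
    · have := hB.2.2.2.2
      simp at this
  · -- [1] is not a target
    rintro ⟨σ, hpσ, ⟨hA, heq⟩ | ⟨hB, heq⟩⟩
    · have h1 := VbcA_len hA.1
      rw [← heq] at h1
      simp at h1
      subst h1
      have := hA.1
      simp [dyLen] at this
    · have h1 := VbcB_len hB.2.1
      rw [← heq] at h1
      simp at h1
      exact hB.2.1 h1
  · -- injectivity
    exact fun σ σ' τ hp hp' h h' => Vbc_inj hp hp' h h'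
  · -- functionality
    rintro σ τ τ' (⟨hA, rfl⟩ | ⟨hB, rfl⟩) (⟨hA', rfl⟩ | ⟨hB', rfl⟩)
    · rfl
    · exact absurd hA (fun h => srcA_srcB_false h hB')
    · exact absurd hA' (fun h => srcA_srcB_false h hB)
    · rfl
  · -- regular faces
    exact fun σ τ hp hrel => regular_face hp hrel
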